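/- For all q, q' with 0 < q < 1 and 0 < q' < 1 and all real λ, ν, the function μ ↦ K(q; λ, μ) K(q'; μ, ν) is integrable on ℝ and ∫_ℝ K(q; λ, μ) K(q'; μ, ν) dμ = K(qq'; λ, ν); that is, the Mehler kernels satisfy the semigroup property K(q) ∗ K(q') = K(qq') under kernel composition. -/

import Mathlib

open MeasureTheory

lemma gauss_aux (p s d : ℝ) (hp : 0 < p) :
    Integrable (fun x : ℝ => Real.exp (-p * x ^ 2 + s * x + d)) (volume : Measure ℝ) ∧
    ∫ x : ℝ, Real.exp (-p * x ^ 2 + s * x + d)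
      = Real.sqrt (Real.pi / p) * Real.exp (s ^ 2 / (4 * p) + d) := by
  have hkey : ∀ x : ℝ, Real.exp (-p * x ^ 2 + s * x + d)
      = Real.exp (-p * (x - s / (2 * p)) ^ 2) * Real.exp (s ^ 2 / (4 * p) + d) := by
    intro x
    rw [← Real.exp_add]
    congr 1
    field_simp
    ring
  simp_rw [hkey]
  constructor
  · exact ((integrable_exp_neg_mul_sq hp).comp_sub_right (s / (2 * p))).mul_const _
  · rw [MeasureTheory.integral_mul_const,
      integral_sub_right_eq_self (fun x => Real.exp (-p * x ^ 2)) (s / (2 * p)),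
      integral_gaussian]

/-- The Mehler kernel
`K(q; λ, μ) = (π(1 − q²))^{−1/2} exp(−q²λ²/(1−q²) − μ²/(1−q²) + 2qλμ/(1−q²))`. -/
noncomputable def mehlerK (q lam mu : ℝ) : ℝ :=
  (Real.sqrt (Real.pi * (1 - q ^ 2)))⁻¹ *
    Real.exp (-q ^ 2 * lam ^ 2 / (1 - q ^ 2) - mu ^ 2 / (1 - q ^ 2)
      + 2 * q * lam * mu / (1 - q ^ 2))

/-- **Semigroup property of the Mehler kernels (Section III of Tracy–Widom, "Differential
Equations for Dyson Processes"): `K(q) ∗ K(q') = K(qq')`.**  For `0 < q, q' < 1` and all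
real `λ, ν`, the function `μ ↦ K(q; λ, μ) K(q'; μ, ν)` is integrable on `ℝ` and
`∫ K(q; λ, μ) K(q'; μ, ν) dμ = K(qq'; λ, ν)`. -/
theorem mehler_semigroup (q q' : ℝ) (hq0 : 0 < q) (hq1 : q < 1)
    (hq'0 : 0 < q') (hq'1 : q' < 1) (lam nu : ℝ) :
    Integrable (fun mu => mehlerK q lam mu * mehlerK q' mu nu) (volume : Measure ℝ) ∧
    ∫ mu : ℝ, mehlerK q lam mu * mehlerK q' mu nu = mehlerK (q * q') lam nu := by
  have hr : (0:ℝ) < 1 - q ^ 2 := by nlinarith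
  have hr' : (0:ℝ) < 1 - q' ^ 2 := by nlinarith
  have hR : (0:ℝ) < 1 - (q * q') ^ 2 := by nlinarith
  have hp : (0:ℝ) < 1 / (1 - q ^ 2) + q' ^ 2 / (1 - q' ^ 2) := by positivity
  obtain ⟨hint, hval⟩ := gauss_aux (1 / (1 - q ^ 2) + q' ^ 2 / (1 - q' ^ 2))
    (2 * q * lam / (1 - q ^ 2) + 2 * q' * nu / (1 - q' ^ 2))
    (-q ^ 2 * lam ^ 2 / (1 - q ^ 2) - nu ^ 2 / (1 - q' ^ 2)) hp
  have hfun : (fun mu => mehlerK q lam mu * mehlerK q' mu nu)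
      = fun mu => ((Real.sqrt (Real.pi * (1 - q ^ 2)))⁻¹ * (Real.sqrt (Real.pi * (1 - q' ^ 2)))⁻¹)
        * Real.exp (-(1 / (1 - q ^ 2) + q' ^ 2 / (1 - q' ^ 2)) * mu ^ 2
          + (2 * q * lam / (1 - q ^ 2) + 2 * q' * nu / (1 - q' ^ 2)) * mu
          + (-q ^ 2 * lam ^ 2 / (1 - q ^ 2) - nu ^ 2 / (1 - q' ^ 2))) := by
    funext mu
    simp only [mehlerK]
    rw [mul_mul_mul_comm, ← Real.exp_add]
    congr 1
    field_simp
    ring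
  have hrrp : (1 - q ^ 2) * (1 - q' ^ 2) * (1 / (1 - q ^ 2) + q' ^ 2 / (1 - q' ^ 2))
      = 1 - (q * q') ^ 2 := by
    field_simp
    ring
  have hC : (Real.sqrt (Real.pi * (1 - q ^ 2)))⁻¹ * (Real.sqrt (Real.pi * (1 - q' ^ 2)))⁻¹
      * Real.sqrt (Real.pi / (1 / (1 - q ^ 2) + q' ^ 2 / (1 - q' ^ 2)))
      = (Real.sqrt (Real.pi * (1 - (q * q') ^ 2)))⁻¹ := by
    have h1 : Real.sqrt (Real.pi * (1 - (q * q') ^ 2))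
        = Real.sqrt (Real.pi * (1 - q ^ 2)) * Real.sqrt (Real.pi * (1 - q' ^ 2))
          / Real.sqrt (Real.pi / (1 / (1 - q ^ 2) + q' ^ 2 / (1 - q' ^ 2))) := by
      rw [← Real.sqrt_mul (by positivity), ← Real.sqrt_div (by positivity)]
      congr 1
      rw [← hrrp]
      field_simp
    rw [h1]
    have h2 : Real.sqrt (Real.pi * (1 - q ^ 2)) ≠ 0 := by positivity
    have h3 : Real.sqrt (Real.pi * (1 - q' ^ 2)) ≠ 0 := by positivity
    have h4 : Real.sqrt (Real.pi / (1 / (1 - q ^ 2) + q' ^ 2 / (1 - q' ^ 2))) ≠ 0 := by positivity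
    field_simp
  have hE : (2 * q * lam / (1 - q ^ 2) + 2 * q' * nu / (1 - q' ^ 2)) ^ 2
        / (4 * (1 / (1 - q ^ 2) + q' ^ 2 / (1 - q' ^ 2)))
        + (-q ^ 2 * lam ^ 2 / (1 - q ^ 2) - nu ^ 2 / (1 - q' ^ 2))
      = -(q * q') ^ 2 * lam ^ 2 / (1 - (q * q') ^ 2) - nu ^ 2 / (1 - (q * q') ^ 2)
        + 2 * (q * q') * lam * nu / (1 - (q * q') ^ 2) := by
    have hR2 : (1:ℝ) - q ^ 2 * q' ^ 2 ≠ 0 := by rw [← mul_pow]; exact hR.ne'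
    field_simp
    ring
  refine ⟨by rw [hfun]; exact hint.const_mul _, ?_⟩
  rw [hfun, MeasureTheory.integral_const_mul, hval, mehlerK, hE, ← mul_assoc, hC]
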